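/- Under hypotheses (H1) and (H2), for every P > 0 the sequence C_M(P) = (1/M)·E[log det G_M] converges to a finite limit as M → ∞ (the limit is denoted C(P)). -/

import Mathlib

open MeasureTheory ProbabilityTheory Filter Matrix

/-- The `M × (M+1)` two-diagonal channel matrix built from the fading
coefficients `a`, `b` (indexed from `1` as in the paper). -/
def Hmat (M : ℕ) (a b : ℕ → ℂ) : Matrix (Fin M) (Fin (M + 1)) ℂ :=
  fun i j =>
    if (j : ℕ) = (i : ℕ) then a ((i : ℕ) + 1)
    else if (j : ℕ) = (i : ℕ) + 1 then b ((i : ℕ) + 1) else 0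

/-- `log det (I + P · H_M H_M*)`, the determinant being real (≥ 1). -/
noncomputable def logdetG (M : ℕ) (P : ℝ) (a b : ℕ → ℂ) : ℝ :=
  Real.log ((Matrix.det (1 + (P : ℂ) • (Hmat M a b * (Hmat M a b)ᴴ))).re)


open scoped ComplexOrder

set_option linter.unusedSectionVars false

section MatrixLemmas

variable {n : Type*} [Fintype n] [DecidableEq n]


/-- det of a PSD matrix is a nonneg real. -/
lemma psd_det_eq {A : Matrix n n ℂ} (hA : A.PosSemidef) :
    A.det = ((∏ i, hA.1.eigenvalues i : ℝ) : ℂ) := by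
  rw [hA.1.det_eq_prod_eigenvalues]; push_cast; rfl

lemma psd_det_re_nonneg {A : Matrix n n ℂ} (hA : A.PosSemidef) : 0 ≤ A.det.re := by
  rw [psd_det_eq hA, Complex.ofReal_re]
  exact Finset.prod_nonneg fun i _ => hA.eigenvalues_nonneg i

lemma det_one_add_psd {A : Matrix n n ℂ} (hA : A.PosSemidef) :
    (1 + A).det = ((∏ i, (1 + hA.1.eigenvalues i) : ℝ) : ℂ) := by
  have hU := hA.1.spectral_theorem
  rw [Unitary.conjStarAlgAut_apply] at hU
  set U := (hA.1.eigenvectorUnitary : Matrix n n ℂ) with hUdef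
  have hUU : U * star U = 1 := (Matrix.mem_unitaryGroup_iff).mp hA.1.eigenvectorUnitary.2
  have h1 : (1 + A) = U * (1 + diagonal (RCLike.ofReal ∘ hA.1.eigenvalues)) * star U := by
    rw [mul_add, add_mul, mul_one, mul_assoc, hUU, ← mul_assoc, ← hU]
  rw [h1, det_mul_right_comm, hUU, one_mul]
  have : (1 : Matrix n n ℂ) + diagonal (RCLike.ofReal ∘ hA.1.eigenvalues)
      = diagonal (fun i => 1 + (hA.1.eigenvalues i : ℂ)) := by
    rw [← diagonal_one, diagonal_add]
    rfl
  rw [this, det_diagonal]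
  push_cast
  rfl

lemma one_le_det_one_add_psd {A : Matrix n n ℂ} (hA : A.PosSemidef) :
    1 ≤ ((1 + A).det).re := by
  rw [det_one_add_psd hA, Complex.ofReal_re]
  calc (1:ℝ) = ∏ _i : n, 1 := by simp
    _ ≤ ∏ i, (1 + hA.1.eigenvalues i) := Finset.prod_le_prod (by simp)
        (fun i _ => le_add_of_nonneg_right (hA.eigenvalues_nonneg i))

lemma psd_trace_re_eq {A : Matrix n n ℂ} (hA : A.PosSemidef) :
    (trace A).re = ∑ i, hA.1.eigenvalues i := by
  have hU := hA.1.spectral_theorem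
  rw [Unitary.conjStarAlgAut_apply] at hU
  set U := (hA.1.eigenvectorUnitary : Matrix n n ℂ)
  have hUU : star U * U = 1 := (Matrix.mem_unitaryGroup_iff').mp hA.1.eigenvectorUnitary.2
  have h2 := congrArg trace hU
  rw [trace_mul_cycle, hUU, one_mul] at h2
  rw [h2, trace_diagonal]
  rw [show ∑ i, (RCLike.ofReal ∘ hA.1.eigenvalues) i = ((∑ i, hA.1.eigenvalues i : ℝ) : ℂ) by
    push_cast; rfl, Complex.ofReal_re]

lemma psd_trace_re_nonneg {A : Matrix n n ℂ} (hA : A.PosSemidef) : 0 ≤ (trace A).re := by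
  rw [psd_trace_re_eq hA]
  exact Finset.sum_nonneg fun i _ => hA.eigenvalues_nonneg i

lemma det_one_add_psd_le {A : Matrix n n ℂ} (hA : A.PosSemidef) :
    ((1 + A).det).re ≤ (1 + (trace A).re) ^ (Fintype.card n) := by
  rw [det_one_add_psd hA, Complex.ofReal_re, psd_trace_re_eq hA]
  calc ∏ i, (1 + hA.1.eigenvalues i)
      ≤ ∏ _i : n, (1 + ∑ j, hA.1.eigenvalues j) := by
        refine Finset.prod_le_prod (fun i _ => add_nonneg zero_le_one (hA.eigenvalues_nonneg i)) ?_
        intro i _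
        refine add_le_add_right ?_ 1
        exact Finset.single_le_sum (fun j _ => hA.eigenvalues_nonneg j) (Finset.mem_univ i)
    _ = (1 + ∑ j, hA.1.eigenvalues j) ^ (Fintype.card n) := by
        rw [Finset.prod_const, Finset.card_univ]

lemma det_one_sub_psd_le_one {Y : Matrix n n ℂ} (hY : Y.PosSemidef)
    (hZ : (1 - Y).PosSemidef) : ((1 - Y).det).re ≤ 1 := by
  rw [psd_det_eq hZ, Complex.ofReal_re]
  refine Finset.prod_le_one (fun i _ => hZ.eigenvalues_nonneg i) ?_
  intro i _
  have hv := hZ.1.eigenvalues_eq i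
  set v : n → ℂ := ⇑(hZ.1.eigenvectorBasis i) with hvdef
  have hnorm : dotProduct (star v) v = 1 := by
    have h1 : (inner ℂ (hZ.1.eigenvectorBasis i) (hZ.1.eigenvectorBasis i) : ℂ) = 1 := by
      rw [inner_self_eq_norm_sq_to_K, hZ.1.eigenvectorBasis.orthonormal.1 i]
      norm_num
    rw [← h1, EuclideanSpace.inner_eq_star_dotProduct, dotProduct_comm]
  have hmv : (1 - Y) *ᵥ v = v - Y *ᵥ v := by
    rw [sub_mulVec, one_mulVec]
  have hpos : 0 ≤ RCLike.re (dotProduct (star v) (Y *ᵥ v)) := hY.re_dotProduct_nonneg v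
  rw [hv, hmv, dotProduct_sub, hnorm, map_sub]
  have h1re : RCLike.re (1 : ℂ) = 1 := RCLike.one_re
  rw [h1re]
  linarith

open scoped MatrixOrder in
/-- det monotonicity: for `W, X` PSD with `W + X` posdef, `det W ≤ det (W+X)` (real parts). -/
lemma det_re_le_det_add_psd {W X : Matrix n n ℂ} (hW : W.PosSemidef) (hX : X.PosSemidef)
    (hWX : (W + X).PosDef) : (det W).re ≤ (det (W + X)).re := by
  set R := CFC.sqrt (W + X) with hR
  have hRpsd : R.PosSemidef := (CFC.sqrt_nonneg (W + X)).posSemidef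
  have hRR : R * R = W + X := CFC.sqrt_mul_sqrt_self (W + X) hWX.posSemidef.nonneg
  have hdet : det R * det R = det (W + X) := by rw [← det_mul, hRR]
  have hdetR : det R ≠ 0 := by
    intro h
    have := hWX.det_pos
    rw [← hdet, h, mul_zero] at this
    exact lt_irrefl _ this
  have hRinv : R * R⁻¹ = 1 := mul_nonsing_inv R (by simpa using hdetR)
  have hRinv' : R⁻¹ * R = 1 := nonsing_inv_mul R (by simpa using hdetR)
  have hRinvH : R⁻¹ᴴ = R⁻¹ := by
    rw [conjTranspose_nonsing_inv, hRpsd.1.eq]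
  set Y := R⁻¹ * X * R⁻¹ with hY
  have hYpsd : Y.PosSemidef := by
    have := hX.conjTranspose_mul_mul_same R⁻¹
    rwa [hRinvH] at this
  have hWeq : W = R * (1 - Y) * R := by
    rw [mul_sub, sub_mul, mul_one, hRR, hY]
    have : R * (R⁻¹ * X * R⁻¹) * R = X := by
      rw [← mul_assoc, ← mul_assoc, hRinv, one_mul, mul_assoc, hRinv', mul_one]
    rw [this, add_sub_cancel_right]
  have h1 : R⁻¹ * W * R⁻¹ = 1 - Y := by
    rw [hWeq]
    calc R⁻¹ * (R * (1 - Y) * R) * R⁻¹ = (R⁻¹ * R) * ((1 - Y) * (R * R⁻¹)) := by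
          simp only [mul_assoc]
      _ = 1 - Y := by rw [hRinv', hRinv, one_mul, mul_one]
  have hZpsd : (1 - Y).PosSemidef := by
    have h2 := hW.conjTranspose_mul_mul_same R⁻¹
    rw [hRinvH] at h2
    rwa [h1] at h2
  have hdetW : det W = det (W + X) * det (1 - Y) := by
    have h3 := congrArg det hWeq
    rw [det_mul, det_mul] at h3
    rw [h3, ← hdet]; ring
  rw [hdetW, ← hdet]
  have hR_real : det R = ((∏ i, hRpsd.1.eigenvalues i : ℝ) : ℂ) := psd_det_eq hRpsd
  have hZ_real : det (1 - Y) = ((∏ i, hZpsd.1.eigenvalues i : ℝ) : ℂ) := psd_det_eq hZpsd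
  set r : ℝ := ∏ i, hRpsd.1.eigenvalues i
  set t : ℝ := ∏ i, hZpsd.1.eigenvalues i
  have ht0 : 0 ≤ t := Finset.prod_nonneg fun i _ => hZpsd.eigenvalues_nonneg i
  have ht1 : t ≤ 1 := by
    have := det_one_sub_psd_le_one hYpsd hZpsd
    rwa [hZ_real, Complex.ofReal_re] at this
  rw [hR_real, hZ_real]
  have e1 : ((r:ℂ) * (r:ℂ) * (t:ℂ)) = (((r*r*t : ℝ)) : ℂ) := by push_cast; ring
  have e2 : ((r:ℂ) * (r:ℂ)) = (((r*r : ℝ)) : ℂ) := by push_cast; ring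
  rw [e1, e2, Complex.ofReal_re, Complex.ofReal_re]
  nlinarith [sq_nonneg r]

/-- Fischer-type inequality for a PSD block matrix with posdef diagonal blocks. -/
lemma fischer_aux {m p : Type*} [Fintype m] [DecidableEq m] [Fintype p] [DecidableEq p]
    {A : Matrix m m ℂ} {B : Matrix m p ℂ} {D : Matrix p p ℂ}
    (hA : A.PosDef) (hD : D.PosDef) (h : (fromBlocks A B Bᴴ D).PosSemidef) :
    ((fromBlocks A B Bᴴ D).det).re ≤ (det A).re * (det D).re := by
  letI := hA.isUnit.invertible
  have hSchur : (D - Bᴴ * A⁻¹ * B).PosSemidef :=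
    (Matrix.PosDef.fromBlocks₁₁ B D hA).mp h
  have hX : (Bᴴ * A⁻¹ * B).PosSemidef := hA.inv.posSemidef.conjTranspose_mul_mul_same B
  have hdet : (fromBlocks A B Bᴴ D).det = det A * det (D - Bᴴ * A⁻¹ * B) := by
    rw [det_fromBlocks₁₁ A B Bᴴ D, invOf_eq_nonsing_inv]
  have hsum : (D - Bᴴ * A⁻¹ * B) + (Bᴴ * A⁻¹ * B) = D := by
    rw [sub_add_cancel]
  have hmono : (det (D - Bᴴ * A⁻¹ * B)).re ≤ (det D).re := by
    have := det_re_le_det_add_psd hSchur hX (by rw [hsum]; exact hD)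
    rwa [hsum] at this
  -- det A is a positive real, Schur det a nonneg real
  have hdA := hA.det_pos
  have hdA_im : (det A).im = 0 := by
    have h0 : (0 : ℂ) ≤ det A := le_of_lt hdA
    exact ((Complex.le_def.mp h0).2).symm
  have hdA_re : 0 < (det A).re := (Complex.lt_def.mp hdA).1
  have hSre : 0 ≤ (det (D - Bᴴ * A⁻¹ * B)).re := psd_det_re_nonneg hSchur
  rw [hdet, Complex.mul_re, hdA_im]
  have hSim : (det (D - Bᴴ * A⁻¹ * B)).im = 0 := by
    rw [psd_det_eq hSchur, Complex.ofReal_im]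
  rw [hSim]
  simp only [mul_zero, zero_mul, sub_zero]
  exact mul_le_mul_of_nonneg_left hmono (le_of_lt hdA_re)


lemma hmat_apply (M : ℕ) (a b : ℕ → ℂ) (i : Fin M) (j : Fin (M+1)) :
    Hmat M a b i j = (if j = Fin.castSucc i then a ((i:ℕ)+1) else 0)
      + (if j = Fin.succ i then b ((i:ℕ)+1) else 0) := by
  unfold Hmat
  simp only [Fin.ext_iff, Fin.coe_castSucc, Fin.val_succ]
  by_cases h1 : (j:ℕ) = (i:ℕ)
  · rw [if_pos h1, if_pos h1, if_neg (by omega), add_zero]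
  · rw [if_neg h1, if_neg h1, zero_add]

lemma gram_apply (M : ℕ) (a b : ℕ → ℂ) (i j : Fin M) :
    (Hmat M a b * (Hmat M a b)ᴴ) i j =
      (if (i:ℕ) = (j:ℕ) then a ((i:ℕ)+1) * star (a ((j:ℕ)+1))
          + b ((i:ℕ)+1) * star (b ((j:ℕ)+1)) else 0)
      + (if (i:ℕ) + 1 = (j:ℕ) then b ((i:ℕ)+1) * star (a ((j:ℕ)+1)) else 0)
      + (if (i:ℕ) = (j:ℕ) + 1 then a ((i:ℕ)+1) * star (b ((j:ℕ)+1)) else 0) := by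
  rw [mul_apply]
  simp only [conjTranspose_apply, hmat_apply, star_add, apply_ite (star : ℂ → ℂ), star_zero,
    add_mul, mul_add, ite_mul, mul_ite, zero_mul, mul_zero]

  rw [Finset.sum_add_distrib,
    Finset.sum_ite_eq' Finset.univ (Fin.castSucc j), Finset.sum_ite_eq' Finset.univ (Fin.succ j)]
  simp only [Finset.mem_univ, if_true]
  simp only [Fin.ext_iff, Fin.coe_castSucc, Fin.val_succ]
  split_ifs <;> first | (exfalso; omega) | ring

lemma smul_gram {m' n' : Type*} [Fintype n'] (P : ℝ) (hP : 0 ≤ P) (H : Matrix m' n' ℂ) :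
    (P:ℂ) • (H * Hᴴ) = (((P.sqrt : ℝ):ℂ) • H) * ((((P.sqrt : ℝ):ℂ) • H))ᴴ := by
  rw [conjTranspose_smul, Matrix.smul_mul, Matrix.mul_smul, smul_smul]
  congr 1
  rw [Complex.star_def, Complex.conj_ofReal, ← Complex.ofReal_mul, Real.mul_self_sqrt hP]

lemma psd_PG {m' n' : Type*} [Fintype m'] [Fintype n'] (P : ℝ) (hP : 0 ≤ P) (H : Matrix m' n' ℂ) :
    ((P:ℂ) • (H * Hᴴ)).PosSemidef := by
  rw [smul_gram P hP H]
  exact posSemidef_self_mul_conjTranspose _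

lemma posdef_S {m' n' : Type*} [Fintype m'] [Fintype n'] [DecidableEq m']
    (P : ℝ) (hP : 0 ≤ P) (H : Matrix m' n' ℂ) :
    (1 + (P:ℂ) • (H * Hᴴ)).PosDef :=
  Matrix.PosDef.add_posSemidef Matrix.PosDef.one (psd_PG P hP H)


lemma one_le_detS (M : ℕ) (P : ℝ) (hP : 0 ≤ P) (a b : ℕ → ℂ) :
    1 ≤ ((1 + (P : ℂ) • (Hmat M a b * (Hmat M a b)ᴴ)).det).re :=
  one_le_det_one_add_psd (psd_PG P hP _)

lemma logdetG_nonneg (M : ℕ) (P : ℝ) (hP : 0 ≤ P) (a b : ℕ → ℂ) :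
    0 ≤ logdetG M P a b :=
  Real.log_nonneg (one_le_detS M P hP a b)

lemma gram_tl (M N : ℕ) (a b : ℕ → ℂ) (i j : Fin M) :
    (Hmat (M+N) a b * (Hmat (M+N) a b)ᴴ) (Fin.castAdd N i) (Fin.castAdd N j)
      = (Hmat M a b * (Hmat M a b)ᴴ) i j := by
  rw [gram_apply, gram_apply]
  simp only [Fin.coe_castAdd]

lemma gram_br (M N : ℕ) (a b : ℕ → ℂ) (i j : Fin N) :
    (Hmat (M+N) a b * (Hmat (M+N) a b)ᴴ) (Fin.natAdd M i) (Fin.natAdd M j)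
      = (Hmat N (fun n => a (M + n)) (fun n => b (M + n)) * (Hmat N (fun n => a (M + n)) (fun n => b (M + n)))ᴴ) i j := by
  rw [gram_apply, gram_apply]
  simp only [Fin.coe_natAdd]
  simp only [show (M + (i:ℕ) = M + (j:ℕ)) ↔ ((i:ℕ) = (j:ℕ)) by omega,
    show (M + (i:ℕ) + 1 = M + (j:ℕ)) ↔ ((i:ℕ) + 1 = (j:ℕ)) by omega,
    show (M + (i:ℕ) = M + (j:ℕ) + 1) ↔ ((i:ℕ) = (j:ℕ) + 1) by omega,
    Nat.add_assoc]
  simp only [show (M + ((i:ℕ) + 1) = M + (j:ℕ)) ↔ ((i:ℕ) + 1 = (j:ℕ)) by omega,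
    show (M + (i:ℕ) = M + ((j:ℕ) + 1)) ↔ ((i:ℕ) = (j:ℕ) + 1) by omega]

lemma logdetG_subadd (M N : ℕ) (P : ℝ) (hP : 0 < P) (a b : ℕ → ℂ) :
    logdetG (M+N) P a b
      ≤ logdetG M P a b + logdetG N P (fun n => a (M + n)) (fun n => b (M + n)) := by
  set H := Hmat (M+N) a b
  set S : Matrix (Fin (M+N)) (Fin (M+N)) ℂ := 1 + (P : ℂ) • (H * Hᴴ) with hSdef
  set H1 := Hmat M a b
  set S1 : Matrix (Fin M) (Fin M) ℂ := 1 + (P : ℂ) • (H1 * H1ᴴ) with hS1def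
  set H2 := Hmat N (fun n => a (M + n)) (fun n => b (M + n))
  set S2 : Matrix (Fin N) (Fin N) ℂ := 1 + (P : ℂ) • (H2 * H2ᴴ) with hS2def
  have hS : S.PosDef := posdef_S P hP.le H
  have hS1 : S1.PosDef := posdef_S P hP.le H1
  have hS2 : S2.PosDef := posdef_S P hP.le H2
  set e : Fin M ⊕ Fin N ≃ Fin (M+N) := finSumFinEquiv with hedef
  set B : Matrix (Fin M) (Fin N) ℂ :=
    Matrix.of (fun i j => S (e (Sum.inl i)) (e (Sum.inr j))) with hBdef
  have hblock : S.submatrix e e = fromBlocks S1 B Bᴴ S2 := by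
    ext x y
    rcases x with i | i <;> rcases y with j | j
    · show S (e (Sum.inl i)) (e (Sum.inl j)) = S1 i j
      rw [hSdef, hS1def]
      simp only [Matrix.add_apply, Matrix.smul_apply, one_apply, hedef, finSumFinEquiv_apply_left]
      rw [gram_tl M N a b i j]
      congr 1
      simp only [Fin.ext_iff, Fin.coe_castAdd]
    · rfl
    · show S (e (Sum.inr i)) (e (Sum.inl j)) = Bᴴ i j
      rw [conjTranspose_apply, hBdef]
      exact (hS.isHermitian.apply _ _).symm
    · show S (e (Sum.inr i)) (e (Sum.inr j)) = S2 i j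
      rw [hSdef, hS2def]
      simp only [Matrix.add_apply, Matrix.smul_apply, one_apply, hedef, finSumFinEquiv_apply_right]
      rw [gram_br M N a b i j]
      congr 1
      simp only [Fin.ext_iff, Fin.coe_natAdd, add_right_inj]
  have hdet_eq : det S = det (fromBlocks S1 B Bᴴ S2) := by
    rw [← hblock, det_submatrix_equiv_self]
  have hPSD : (fromBlocks S1 B Bᴴ S2).PosSemidef := by
    rw [← hblock]
    exact (posSemidef_submatrix_equiv e).mpr hS.posSemidef
  have hfisch := fischer_aux hS1 hS2 hPSD
  rw [← hdet_eq] at hfisch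
  have h1 : (1:ℝ) ≤ (det S1).re := one_le_detS M P hP.le a b
  have h2 : (1:ℝ) ≤ (det S2).re := one_le_detS N P hP.le _ _
  have h0 : (1:ℝ) ≤ (det S).re := one_le_detS (M+N) P hP.le a b
  show Real.log (det S).re ≤ Real.log (det S1).re + Real.log (det S2).re
  calc Real.log (det S).re ≤ Real.log ((det S1).re * (det S2).re) :=
        Real.log_le_log (by linarith) hfisch
    _ = Real.log (det S1).re + Real.log (det S2).re :=
        Real.log_mul (by linarith) (by linarith)

lemma trace_gram_re (M : ℕ) (a b : ℕ → ℂ) :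
    (trace (Hmat M a b * (Hmat M a b)ᴴ)).re
      = ∑ i : Fin M, (Complex.normSq (a ((i:ℕ)+1)) + Complex.normSq (b ((i:ℕ)+1))) := by
  rw [trace]
  rw [Complex.re_sum]
  refine Finset.sum_congr rfl fun i _ => ?_
  rw [diag_apply, gram_apply]
  simp only [if_pos rfl, if_neg (show ¬((i:ℕ)+1 = (i:ℕ)) by omega),
    if_neg (show ¬((i:ℕ) = (i:ℕ)+1) by omega), add_zero, if_true]
  rw [show (star (a ((i:ℕ)+1)) : ℂ) = (starRingEnd ℂ) (a ((i:ℕ)+1)) from rfl,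
    show (star (b ((i:ℕ)+1)) : ℂ) = (starRingEnd ℂ) (b ((i:ℕ)+1)) from rfl,
    Complex.mul_conj, Complex.mul_conj, ← Complex.ofReal_add, Complex.ofReal_re]

lemma log_one_add_sum_le {ι : Type*} (s : Finset ι) (f : ι → ℝ) (hf : ∀ i ∈ s, 0 ≤ f i) :
    Real.log (1 + ∑ i ∈ s, f i) ≤ ∑ i ∈ s, Real.log (1 + f i) := by
  have hprod : 1 + ∑ i ∈ s, f i ≤ ∏ i ∈ s, (1 + f i) := by
    classical
    induction s using Finset.induction_on with
    | empty => simp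
    | insert x t hx ih =>
      rw [Finset.sum_insert hx, Finset.prod_insert hx]
      have hxf : 0 ≤ f x := hf x (Finset.mem_insert_self x t)
      have hsum : 0 ≤ ∑ i ∈ t, f i :=
        Finset.sum_nonneg fun i hi => hf i (Finset.mem_insert_of_mem hi)
      have ih' := ih (fun i hi => hf i (Finset.mem_insert_of_mem hi))
      nlinarith
  have hpos : 0 < 1 + ∑ i ∈ s, f i := by
    have : 0 ≤ ∑ i ∈ s, f i := Finset.sum_nonneg hf
    linarith
  calc Real.log (1 + ∑ i ∈ s, f i) ≤ Real.log (∏ i ∈ s, (1 + f i)) :=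
        Real.log_le_log hpos hprod
    _ = ∑ i ∈ s, Real.log (1 + f i) :=
        Real.log_prod (fun i hi => by have := hf i hi; positivity)

lemma logdetG_le (M : ℕ) (P : ℝ) (hP : 0 < P) (a b : ℕ → ℂ) :
    logdetG M P a b ≤ (M:ℝ) * ∑ i : Fin M,
      Real.log (1 + P * (Complex.normSq (a ((i:ℕ)+1)) + Complex.normSq (b ((i:ℕ)+1)))) := by
  set G := Hmat M a b * (Hmat M a b)ᴴ
  set t : ℝ := ∑ i : Fin M, (Complex.normSq (a ((i:ℕ)+1)) + Complex.normSq (b ((i:ℕ)+1))) with htdef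
  have ht0 : 0 ≤ t := Finset.sum_nonneg fun i _ =>
    add_nonneg (Complex.normSq_nonneg _) (Complex.normSq_nonneg _)
  have htr : (trace ((P:ℂ) • G)).re = P * t := by
    rw [trace_smul]
    rw [smul_eq_mul, Complex.mul_re, Complex.ofReal_re, Complex.ofReal_im, zero_mul, sub_zero]
    rw [trace_gram_re]
  have hdet_le := det_one_add_psd_le (psd_PG P hP.le (Hmat M a b))
  rw [htr] at hdet_le
  have h1 : (1:ℝ) ≤ ((1 + (P:ℂ) • G).det).re := one_le_detS M P hP.le a b
  have hcard : Fintype.card (Fin M) = M := Fintype.card_fin M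
  rw [hcard] at hdet_le
  calc logdetG M P a b ≤ Real.log ((1 + P * t) ^ M) := Real.log_le_log (by linarith) hdet_le
    _ = (M:ℝ) * Real.log (1 + P * t) := by rw [Real.log_pow]
    _ ≤ (M:ℝ) * ∑ i : Fin M,
        Real.log (1 + P * (Complex.normSq (a ((i:ℕ)+1)) + Complex.normSq (b ((i:ℕ)+1)))) := by
        refine mul_le_mul_of_nonneg_left ?_ (Nat.cast_nonneg M)
        have := log_one_add_sum_le (Finset.univ : Finset (Fin M))
          (fun i => P * (Complex.normSq (a ((i:ℕ)+1)) + Complex.normSq (b ((i:ℕ)+1))))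
          (fun i _ => mul_nonneg hP.le (add_nonneg (Complex.normSq_nonneg _) (Complex.normSq_nonneg _)))
        rw [← Finset.mul_sum] at this
        exact this

lemma log_one_add_sq_le (x : ℝ) (hx : 0 ≤ x) :
    Real.log (1 + x^2) ≤ Real.log 2 + 1 + (Real.log x)^2 := by
  have hl2 : 0 ≤ Real.log 2 := Real.log_nonneg (by norm_num)
  rcases le_or_gt x 1 with h | h
  · have : Real.log (1 + x^2) ≤ Real.log 2 :=
      Real.log_le_log (by positivity) (by nlinarith)
    nlinarith [sq_nonneg (Real.log x)]
  · have hx1 : (1:ℝ) < x := h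
    have hlx : 0 ≤ Real.log x := Real.log_nonneg hx1.le
    have h1 : Real.log (1 + x^2) ≤ Real.log (2 * x^2) :=
      Real.log_le_log (by positivity) (by nlinarith)
    have h2 : Real.log (2 * x^2) = Real.log 2 + 2 * Real.log x := by
      rw [Real.log_mul (by norm_num) (by positivity), Real.log_pow]
      push_cast; ring
    nlinarith [sq_nonneg (Real.log x - 1)]

lemma log_term_bound (P : ℝ) (hP : 0 < P) (z w : ℂ) :
    Real.log (1 + P * (Complex.normSq z + Complex.normSq w))
      ≤ 2 * (Real.log (1+P) + Real.log 2 + 1)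
        + (Real.log ‖z‖)^2 + (Real.log ‖w‖)^2 := by
  set s := Complex.normSq z with hs
  set t := Complex.normSq w with ht
  have hs0 : 0 ≤ s := Complex.normSq_nonneg z
  have ht0 : 0 ≤ t := Complex.normSq_nonneg w
  have step1 : Real.log (1 + P * (s + t)) ≤ Real.log (1 + P*s) + Real.log (1 + P*t) := by
    have hm : 1 + P * (s + t) ≤ (1 + P*s) * (1 + P*t) := by
      nlinarith [mul_nonneg (mul_nonneg (mul_nonneg hP.le hP.le) hs0) ht0]
    calc Real.log (1 + P * (s + t)) ≤ Real.log ((1 + P*s) * (1 + P*t)) :=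
          Real.log_le_log (by positivity) hm
      _ = _ := Real.log_mul (by positivity) (by positivity)
  have key : ∀ u : ℂ, Real.log (1 + P * Complex.normSq u)
      ≤ Real.log (1+P) + Real.log 2 + 1 + (Real.log ‖u‖)^2 := by
    intro u
    set x := ‖u‖ with hx
    have hx0 : (0:ℝ) ≤ x := norm_nonneg u
    have hnsq : Complex.normSq u = x^2 := Complex.normSq_eq_norm_sq u
    rw [hnsq]
    have h1 : 1 + P * x^2 ≤ (1+P) * (1+x^2) := by nlinarith [sq_nonneg x]
    have h2 : Real.log (1 + P * x^2) ≤ Real.log (1+P) + Real.log (1+x^2) := by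
      calc Real.log (1 + P * x^2) ≤ Real.log ((1+P) * (1+x^2)) :=
            Real.log_le_log (by positivity) h1
        _ = _ := Real.log_mul (by positivity) (by positivity)
    have h3 := log_one_add_sq_le x hx0
    linarith
  have hz := key z
  have hw := key w
  linarith

end MatrixLemmas

section ProbLemmas

variable {Ω : Type*} [MeasureSpace Ω] [IsProbabilityMeasure (ℙ : Measure Ω)]


/-- Joint law of an injectively-selected finite subfamily of an independent family
is the product of the individual laws. -/
lemma map_sel_eq_pi {κ ι' : Type*} [Fintype κ] [DecidableEq ι']
    (X : ι' → Ω → ℂ) (hX : ∀ j, Measurable (X j))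
    (hindep : iIndepFun X ℙ)
    (law : ι' → Measure ℂ) [∀ j, IsProbabilityMeasure (law j)]
    (hlaw : ∀ j, Measure.map (X j) ℙ = law j)
    (ι : κ → ι') (hι : Function.Injective ι) :
    Measure.map (fun ω k => X (ι k) ω) ℙ = Measure.pi (fun k => law (ι k)) := by
  classical
  symm
  refine Measure.pi_eq (fun s hs => ?_)
  have hmeas : Measurable (fun ω k => X (ι k) ω) :=
    measurable_pi_lambda _ (fun k => hX (ι k))
  rw [Measure.map_apply hmeas (MeasurableSet.univ_pi hs)]
  have hpre : (fun ω k => X (ι k) ω) ⁻¹' (Set.pi Set.univ s) = ⋂ k, X (ι k) ⁻¹' (s k) := by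
    ext ω; simp [Set.mem_pi]
  rw [hpre]
  -- extended choice of sets
  set s' : ι' → Set ℂ := fun j => if h : ∃ k, ι k = j then s h.choose else Set.univ with hs'def
  have hs'sel : ∀ k, s' (ι k) = s k := by
    intro k
    have h : ∃ k', ι k' = ι k := ⟨k, rfl⟩
    have : h.choose = k := hι h.choose_spec
    simp only [hs'def, dif_pos h, this]
  have hs'meas : ∀ j, MeasurableSet (s' j) := by
    intro j
    by_cases h : ∃ k, ι k = j
    · simp only [hs'def, dif_pos h]; exact hs h.choose
    · simp only [hs'def, dif_neg h]; exact MeasurableSet.univ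
  have hiInter : (⋂ k, X (ι k) ⁻¹' (s k)) = ⋂ j ∈ Finset.image ι Finset.univ, X j ⁻¹' (s' j) := by
    ext ω
    simp only [Set.mem_iInter, Set.mem_preimage, Finset.mem_image, Finset.mem_univ, true_and]
    constructor
    · rintro h j ⟨k, rfl⟩
      rw [hs'sel k]; exact h k
    · intro h k
      have := h (ι k) ⟨k, rfl⟩
      rwa [hs'sel k] at this
  rw [hiInter]
  rw [hindep.meas_biInter (fun j _ => ⟨s' j, hs'meas j, rfl⟩)]
  rw [Finset.prod_image (fun k _ k' _ h => hι h)]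
  refine Finset.prod_congr rfl (fun k _ => ?_)
  rw [hs'sel k, ← hlaw (ι k), Measure.map_apply (hX (ι k)) (hs k)]

def Hv (M : ℕ) (v : (Fin M ⊕ Fin M) → ℂ) : Matrix (Fin M) (Fin (M+1)) ℂ :=
  fun i j => if (j:ℕ) = (i:ℕ) then v (Sum.inl i)
    else if (j:ℕ) = (i:ℕ)+1 then v (Sum.inr i) else 0

noncomputable def Fdet (M : ℕ) (P : ℝ) (v : (Fin M ⊕ Fin M) → ℂ) : ℝ :=
  Real.log ((Matrix.det (1 + (P : ℂ) • (Hv M v * (Hv M v)ᴴ))).re)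

lemma Fdet_meas (M : ℕ) (P : ℝ) : Measurable (Fdet M P) := by
  have hent : ∀ i j, Continuous (fun v : (Fin M ⊕ Fin M) → ℂ => Hv M v i j) := by
    intro i j
    unfold Hv
    by_cases h1 : (j:ℕ) = (i:ℕ)
    · simpa [h1] using continuous_apply (Sum.inl i)
    · by_cases h2 : (j:ℕ) = (i:ℕ)+1
      · simpa [h1, h2] using continuous_apply (Sum.inr i)
      · simpa [h1, h2] using continuous_const
  have hH : Continuous (fun v : (Fin M ⊕ Fin M) → ℂ => Hv M v) :=
    continuous_matrix hent
  have hdet : Continuous (fun v : (Fin M ⊕ Fin M) → ℂ =>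
      (Matrix.det (1 + (P : ℂ) • (Hv M v * (Hv M v)ᴴ))).re) := by
    refine Complex.continuous_re.comp (Continuous.matrix_det ?_)
    exact continuous_const.add (by have h := (hH.matrix_mul hH.matrix_conjTranspose).const_smul (P : ℂ); exact h)
  exact Real.measurable_log.comp hdet.measurable

end ProbLemmas

theorem statement0
    {Ω : Type*} [MeasureSpace Ω] [IsProbabilityMeasure (ℙ : Measure Ω)]
    (πa πb : Measure ℂ) [IsProbabilityMeasure πa] [IsProbabilityMeasure πb]
    (a b : ℕ → Ω → ℂ)
    (ha_meas : ∀ n, Measurable (a n)) (hb_meas : ∀ n, Measurable (b n))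
    (ha_law : ∀ n, Measure.map (a n) ℙ = πa)
    (hb_law : ∀ n, Measure.map (b n) ℙ = πb)
    (h_indep : iIndepFun (Sum.elim a b) ℙ)
    -- (H1)
    (H1a : Integrable (fun x : ℂ => (Real.log ‖x‖) ^ 2) πa)
    (H1b : Integrable (fun x : ℂ => (Real.log ‖x‖) ^ 2) πb)
    -- (H2)
    (H2a : πa ≪ (volume : Measure ℂ)) (H2b : πb ≪ (volume : Measure ℂ))
    (P : ℝ) (hP : 0 < P) :
    ∃ L : ℝ, Tendsto
      (fun M : ℕ =>
        (1 / (M : ℝ)) *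
          ∫ ω, logdetG M P (fun n => a n ω) (fun n => b n ω) ∂ℙ)
      atTop (nhds L) := by
  classical
  set X : ℕ ⊕ ℕ → Ω → ℂ := Sum.elim a b with hXdef
  have hXmeas : ∀ j, Measurable (X j) := by rintro (n | n); exacts [ha_meas n, hb_meas n]
  set law : ℕ ⊕ ℕ → Measure ℂ := Sum.elim (fun _ => πa) (fun _ => πb) with hlawdef
  haveI hlawprob : ∀ j, IsProbabilityMeasure (law j) := by
    rintro (n | n)
    · show IsProbabilityMeasure πa; infer_instance
    · show IsProbabilityMeasure πb; infer_instance
  have hlaw : ∀ j, Measure.map (X j) ℙ = law j := by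
    rintro (n | n); exacts [ha_law n, hb_law n]
  -- shift selectors
  let ι : ℕ → ∀ M : ℕ, (Fin M ⊕ Fin M) → ℕ ⊕ ℕ := fun σ M =>
    Sum.map (fun i : Fin M => σ + ((i:ℕ)+1)) (fun i : Fin M => σ + ((i:ℕ)+1))
  let vec : ℕ → ∀ M : ℕ, Ω → (Fin M ⊕ Fin M) → ℂ := fun σ M ω k => X (ι σ M k) ω
  have hvecmeas : ∀ σ M, Measurable (vec σ M) := fun σ M =>
    measurable_pi_lambda _ (fun k => hXmeas _)
  have hFdet : ∀ σ M (ω : Ω), Fdet M P (vec σ M ω)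
      = logdetG M P (fun n => a (σ + n) ω) (fun n => b (σ + n) ω) := by
    intro σ M ω
    have hHv : Hv M (vec σ M ω)
        = Hmat M (fun n => a (σ + n) ω) (fun n => b (σ + n) ω) := by
      ext i j
      unfold Hv Hmat
      by_cases h1 : (j:ℕ) = (i:ℕ)
      · simp only [if_pos h1]; rfl
      · by_cases h2 : (j:ℕ) = (i:ℕ)+1
        · simp only [if_neg h1, if_pos h2]; rfl
        · simp only [if_neg h1, if_neg h2]
    unfold Fdet logdetG
    rw [hHv]
  -- the common value of the shifted expectations
  set J : ℕ → ℝ := fun M => ∫ v, Fdet M P v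
    ∂(Measure.pi (fun k : Fin M ⊕ Fin M => Sum.elim (fun _ => πa) (fun _ => πb) k)) with hJdef
  have hmap : ∀ σ M, Measure.map (vec σ M) ℙ
      = Measure.pi (fun k : Fin M ⊕ Fin M => Sum.elim (fun _ => πa) (fun _ => πb) k) := by
    intro σ M
    have hinj : Function.Injective (ι σ M) := by
      have h1 : Function.Injective (fun i : Fin M => σ + ((i:ℕ)+1)) := by
        intro x y h
        have h' : σ + ((x:ℕ) + 1) = σ + ((y:ℕ) + 1) := h
        exact Fin.ext (by omega)
      exact h1.sumMap h1
    have h := map_sel_eq_pi X hXmeas h_indep law hlaw (ι σ M) hinj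
    have h2 : (fun k : Fin M ⊕ Fin M => law (ι σ M k))
        = (fun k : Fin M ⊕ Fin M => Sum.elim (fun _ => πa) (fun _ => πb) k) := by
      funext k; rcases k with k | k <;> rfl
    rw [h2] at h
    exact h
  have hshift : ∀ σ M, (∫ ω, logdetG M P (fun n => a (σ + n) ω) (fun n => b (σ + n) ω) ∂ℙ)
      = J M := by
    intro σ M
    have h1 : (fun ω => logdetG M P (fun n => a (σ + n) ω) (fun n => b (σ + n) ω))
        = fun ω => Fdet M P (vec σ M ω) := funext fun ω => (hFdet σ M ω).symm
    rw [h1]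
    rw [← integral_map (hvecmeas σ M).aemeasurable (Fdet_meas M P).aestronglyMeasurable]
    rw [hmap σ M]
  -- integrability of the shifted integrands
  have hsqa : ∀ n, Integrable (fun ω => (Real.log ‖a n ω‖)^2) ℙ := by
    intro n
    have hφ : Measurable (fun x : ℂ => (Real.log ‖x‖)^2) :=
      (Real.measurable_log.comp (Continuous.measurable continuous_norm)).pow_const 2
    have h := (integrable_map_measure hφ.aestronglyMeasurable (ha_meas n).aemeasurable).mp
      (by rw [ha_law n]; exact H1a)
    exact h
  have hsqb : ∀ n, Integrable (fun ω => (Real.log ‖b n ω‖)^2) ℙ := by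
    intro n
    have hφ : Measurable (fun x : ℂ => (Real.log ‖x‖)^2) :=
      (Real.measurable_log.comp (Continuous.measurable continuous_norm)).pow_const 2
    have h := (integrable_map_measure hφ.aestronglyMeasurable (hb_meas n).aemeasurable).mp
      (by rw [hb_law n]; exact H1b)
    exact h
  have intlem : ∀ σ M,
      Integrable (fun ω => logdetG M P (fun n => a (σ + n) ω) (fun n => b (σ + n) ω)) ℙ := by
    intro σ M
    set K : ℝ := 2 * (Real.log (1+P) + Real.log 2 + 1) with hK
    set g : Ω → ℝ := fun ω => (M:ℝ) * ∑ i : Fin M,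
      (K + (Real.log ‖a (σ + ((i:ℕ)+1)) ω‖)^2
         + (Real.log ‖b (σ + ((i:ℕ)+1)) ω‖)^2) with hg
    have hgint : Integrable g ℙ := by
      refine Integrable.const_mul ?_ _
      refine integrable_finset_sum _ (fun i _ => ?_)
      exact ((integrable_const K).add (hsqa _)).add (hsqb _)
    have hfmeas : Measurable (fun ω => logdetG M P (fun n => a (σ + n) ω) (fun n => b (σ + n) ω)) := by
      have h1 : (fun ω => logdetG M P (fun n => a (σ + n) ω) (fun n => b (σ + n) ω))
          = fun ω => Fdet M P (vec σ M ω) := funext fun ω => (hFdet σ M ω).symm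
      rw [h1]
      exact (Fdet_meas M P).comp (hvecmeas σ M)
    refine Integrable.mono' hgint hfmeas.aestronglyMeasurable (ae_of_all _ (fun ω => ?_))
    have hnn : 0 ≤ logdetG M P (fun n => a (σ + n) ω) (fun n => b (σ + n) ω) :=
      logdetG_nonneg M P hP.le _ _
    rw [Real.norm_eq_abs, abs_of_nonneg hnn]
    have hle := logdetG_le M P hP (fun n => a (σ + n) ω) (fun n => b (σ + n) ω)
    refine hle.trans ?_
    rw [hg]
    refine mul_le_mul_of_nonneg_left ?_ (Nat.cast_nonneg M)
    refine Finset.sum_le_sum (fun i _ => ?_)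
    have := log_term_bound P hP (a (σ + ((i:ℕ)+1)) ω) (b (σ + ((i:ℕ)+1)) ω)
    rw [hK]
    linarith
  -- the sequence of expectations
  set u : ℕ → ℝ := fun M => ∫ ω, logdetG M P (fun n => a n ω) (fun n => b n ω) ∂ℙ with hu
  have hzero : ∀ M, (fun ω => logdetG M P (fun n => a (0 + n) ω) (fun n => b (0 + n) ω))
      = fun ω => logdetG M P (fun n => a n ω) (fun n => b n ω) := by
    intro M; funext ω; simp only [Nat.zero_add]
  have huJ : ∀ M, u M = J M := by
    intro M
    rw [hu, ← hshift 0 M]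
    rw [hzero M]
  have hint0 : ∀ M, Integrable (fun ω => logdetG M P (fun n => a n ω) (fun n => b n ω)) ℙ := by
    intro M
    have := intlem 0 M
    rwa [hzero M] at this
  have husub : Subadditive u := by
    intro m n'
    have hptwise : ∀ ω : Ω, logdetG (m + n') P (fun k => a k ω) (fun k => b k ω)
        ≤ logdetG m P (fun k => a k ω) (fun k => b k ω)
          + logdetG n' P (fun k => a (m + k) ω) (fun k => b (m + k) ω) :=
      fun ω => logdetG_subadd m n' P hP _ _
    calc u (m + n') ≤ ∫ ω, (logdetG m P (fun k => a k ω) (fun k => b k ω)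
          + logdetG n' P (fun k => a (m + k) ω) (fun k => b (m + k) ω)) ∂ℙ :=
          integral_mono (hint0 (m+n')) ((hint0 m).add (intlem m n')) hptwise
      _ = u m + ∫ ω, logdetG n' P (fun k => a (m + k) ω) (fun k => b (m + k) ω) ∂ℙ :=
          integral_add (hint0 m) (intlem m n')
      _ = u m + J n' := by rw [hshift m n']
      _ = u m + u n' := by rw [← huJ n']
  have hunn : ∀ M, 0 ≤ u M := fun M =>
    integral_nonneg (fun ω => logdetG_nonneg M P hP.le _ _)
  have hbdd : BddBelow (Set.range fun M => u M / M) := by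
    refine ⟨0, ?_⟩
    rintro x ⟨M, rfl⟩
    exact div_nonneg (hunn M) (Nat.cast_nonneg M)
  refine ⟨husub.lim, ?_⟩
  have htd := husub.tendsto_lim hbdd
  refine htd.congr (fun M => ?_)
  rw [one_div, inv_mul_eq_div]
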